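/- Let α ≥ 1, θ ∈ (0,1), h the density of X + θZ with X ~ Gamma(α,1), Z ~ Exponential(1) independent, and g_{α+1} the Gamma(α+1,1) density. Then h'(x)/g'_{α+1}(x) is strictly decreasing on (0, α) and strictly decreasing on (α, ∞). -/

import Mathlib

open Real Set

noncomputable def gammaDens (α t : ℝ) : ℝ := t ^ (α - 1) * Real.exp (-t) / Real.Gamma α

noncomputable def convDens (α θ x : ℝ) : ℝ :=
  ∫ t in (0:ℝ)..x, gammaDens α (x - t) * (θ⁻¹ * Real.exp (-t / θ))

noncomputable def psi (α c x : ℝ) : ℝ := ∫ s in (0:ℝ)..x, s ^ (α - 1) * Real.exp (c * s)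

def Pq (α c x : ℝ) : ℝ := α * (α - 1 - x) + c * x * (α - x)
def Qq (α c x : ℝ) : ℝ := x * (α - 1 - x) + c * x * (α - x)

noncomputable def Phi (α c x : ℝ) : ℝ :=
  x ^ (α - 1) * Real.exp (c * x) * Qq α c x - (1 + c) * Pq α c x * psi α c x

section Basic

variable {α c : ℝ}

lemma cont_integrand (hα : 1 ≤ α) :
    Continuous fun s : ℝ => s ^ (α - 1) * Real.exp (c * s) :=
  (Real.continuous_rpow_const (by linarith)).mul (Real.continuous_exp.comp (continuous_const.mul continuous_id))

lemma psi_hasDeriv (hα : 1 ≤ α) (x : ℝ) :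
    HasDerivAt (psi α c) (x ^ (α - 1) * Real.exp (c * x)) x := by
  have hc := cont_integrand (c := c) hα
  exact intervalIntegral.integral_hasDerivAt_right (hc.intervalIntegrable _ _)
    hc.aestronglyMeasurable.stronglyMeasurableAtFilter hc.continuousAt

lemma psi_cont (hα : 1 ≤ α) : Continuous (psi α c) :=
  continuous_iff_continuousAt.2 fun x => (psi_hasDeriv hα x).differentiableAt.continuousAt

lemma Pq_hasDeriv (x : ℝ) : HasDerivAt (Pq α c) (α * (c - 1) - 2 * c * x) x := by
  have h1 : HasDerivAt (fun x : ℝ => α * (α - 1 - x)) (α * (-1)) x := by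
    simpa using ((hasDerivAt_id x).const_sub (α - 1)).const_mul α
  have h2 : HasDerivAt (fun x : ℝ => c * x * (α - x)) (c * (α - x) + c * x * (-1)) x := by
    simpa [Pi.mul_def] using ((hasDerivAt_id x).const_mul c).mul ((hasDerivAt_id x).const_sub α)
  refine (h1.add h2).congr_deriv ?_
  ring

lemma Pq_cont : Continuous (Pq α c) := by
  unfold Pq; continuity

end Basic
section Deriv

variable {α c : ℝ}

noncomputable def PhiD (α c x : ℝ) : ℝ :=
  x ^ (α - 1) * Real.exp (c * x) * (α * c - (1 + 2 * c) * x)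
    - (1 + c) * (α * (c - 1) - 2 * c * x) * psi α c x

lemma Qq_hasDeriv (x : ℝ) :
    HasDerivAt (Qq α c) ((α - 1 - x) + x * (-1) + (c * (α - x) + c * x * (-1))) x := by
  have h1 : HasDerivAt (fun x : ℝ => x * (α - 1 - x)) ((α - 1 - x) + x * (-1)) x := by
    simpa [Pi.mul_def] using (hasDerivAt_id x).mul ((hasDerivAt_id x).const_sub (α - 1))
  have h2 : HasDerivAt (fun x : ℝ => c * x * (α - x)) (c * (α - x) + c * x * (-1)) x := by
    simpa [Pi.mul_def] using ((hasDerivAt_id x).const_mul c).mul ((hasDerivAt_id x).const_sub α)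
  exact h1.add h2

lemma A_hasDeriv (hx : 0 < x) :
    HasDerivAt (fun x : ℝ => x ^ (α - 1) * Real.exp (c * x))
      ((α - 1) * x ^ (α - 1) / x * Real.exp (c * x) + x ^ (α - 1) * (c * Real.exp (c * x))) x := by
  have h1 : HasDerivAt (fun x : ℝ => x ^ (α - 1)) ((α - 1) * x ^ (α - 1) / x) x := by
    have h := Real.hasDerivAt_rpow_const (x := x) (p := α - 1) (Or.inl hx.ne')
    have e : x ^ (α - 1 - 1) = x ^ (α - 1) / x := by
      rw [Real.rpow_sub hx, Real.rpow_one]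
    rw [e] at h
    simpa [mul_div_assoc] using h
  have h2 : HasDerivAt (fun x : ℝ => Real.exp (c * x)) (c * Real.exp (c * x)) x := by
    simpa [mul_comm, Function.comp_def] using (Real.hasDerivAt_exp (c * x)).comp x ((hasDerivAt_id x).const_mul c)
  exact h1.mul h2

lemma Phi_hasDeriv (hα : 1 ≤ α) (hx : 0 < x) :
    HasDerivAt (Phi α c) (PhiD α c x) x := by
  have h1 := (A_hasDeriv (α := α) (c := c) hx).mul (Qq_hasDeriv (α := α) (c := c) x)
  have h2 := ((Pq_hasDeriv (α := α) (c := c) x).mul (psi_hasDeriv (c := c) hα x)).const_mul (1 + c)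
  have h := h1.sub h2
  have e : Phi α c = fun y => y ^ (α - 1) * Real.exp (c * y) * Qq α c y
      - (1 + c) * (Pq α c y * psi α c y) := by
    funext y; unfold Phi; ring
  rw [e]
  refine h.congr_deriv ?_
  unfold PhiD Pq Qq
  field_simp
  ring

lemma wronskian (x : ℝ) :
    PhiD α c x * Pq α c x - Phi α c x * (α * (c - 1) - 2 * c * x)
      = x ^ (α - 1) * Real.exp (c * x) * (c * (α - x) * ((x - α + 1) ^ 2 + (α - 1))) := by
  unfold PhiD Phi Pq Qq
  ring

end Deriv
section Pstruct

variable {α c : ℝ}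

lemma P_decay (hα : 1 ≤ α) (hc : 0 < c) {y t : ℝ} (hy : 0 < y) (hyt : y ≤ t)
    (hP : Pq α c y ≤ 0) : Pq α c t ≤ Pq α c y - c * t * (t - y) := by
  unfold Pq at *
  have h0 : 0 ≤ α * (α - 1) := mul_nonneg (by linarith) (by linarith)
  have h1 : α * (c - 1) ≤ c * y := by
    have h2 : α * (c - 1) * y ≤ c * y * y := by nlinarith
    have := (mul_le_mul_iff_of_pos_right hy).1 h2
    linarith [this]
  nlinarith [mul_le_mul_of_nonneg_right h1 (sub_nonneg.2 hyt)]

lemma Pq_zero_val : Pq α c 0 = α * (α - 1) := by unfold Pq; ring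

lemma Pq_alpha : Pq α c α = -α := by unfold Pq; ring

lemma Qq_alpha : Qq α c α = -α := by unfold Qq; ring

lemma Qq_zero : Qq α c 0 = 0 := by unfold Qq; ring

lemma psi_zero : psi α c 0 = 0 := by unfold psi; simp

lemma Phi_zero : Phi α c 0 = 0 := by
  unfold Phi; rw [Qq_zero, psi_zero]; ring

end Pstruct

section Anchor

variable {α c : ℝ}

lemma anchor_key (hα : 1 ≤ α) (hc : 0 < c) :
    α ^ (α - 1) * Real.exp (c * α) < (1 + c) * psi α c α := by
  have hA : (0:ℝ) < α := by linarith
  set r : ℝ := α - 1 + c * α with hr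
  have hr0 : 0 < r + 1 := by nlinarith
  have hlow : ∫ s in (0:ℝ)..α, Real.exp (c * α) * α ^ (-(c * α)) * s ^ r
      < psi α c α := by
    unfold psi
    apply intervalIntegral.integral_lt_integral_of_continuousOn_of_le_of_exists_lt hA
    · exact (continuous_const.mul (Real.continuous_rpow_const (by nlinarith))).continuousOn
    · exact (cont_integrand hα).continuousOn
    · intro s hs
      obtain ⟨hs0, hsα⟩ := hs
      have hsr : s ^ r = s ^ (α - 1) * s ^ (c * α) := by
        rw [hr, Real.rpow_add hs0]
      rw [hsr]
      have key : Real.exp (c * α) * α ^ (-(c * α)) * s ^ (c * α) ≤ Real.exp (c * s) := by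
        rw [Real.rpow_def_of_pos hA, Real.rpow_def_of_pos hs0, ← Real.exp_add, ← Real.exp_add]
        apply Real.exp_le_exp.2
        have hlog : Real.log s - Real.log α ≤ s / α - 1 := by
          rw [← Real.log_div hs0.ne' hA.ne']
          exact Real.log_le_sub_one_of_pos (div_pos hs0 hA)
        have := mul_le_mul_of_nonneg_left hlog (by positivity : (0:ℝ) ≤ c * α)
        have hca : c * α * (s / α - 1) = c * s - c * α := by field_simp
        nlinarith
      calc Real.exp (c * α) * α ^ (-(c * α)) * (s ^ (α - 1) * s ^ (c * α))
          = s ^ (α - 1) * (Real.exp (c * α) * α ^ (-(c * α)) * s ^ (c * α)) := by ring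
        _ ≤ s ^ (α - 1) * Real.exp (c * s) := by
            apply mul_le_mul_of_nonneg_left key (Real.rpow_nonneg hs0.le _)
    · refine ⟨α / 2, ⟨by linarith, by linarith⟩, ?_⟩
      have hs0 : (0:ℝ) < α / 2 := by linarith
      have hsr : (α/2) ^ r = (α/2) ^ (α - 1) * (α/2) ^ (c * α) := by
        rw [hr, Real.rpow_add hs0]
      rw [hsr]
      have key : Real.exp (c * α) * α ^ (-(c * α)) * (α/2) ^ (c * α) < Real.exp (c * (α/2)) := by
        rw [Real.rpow_def_of_pos hA, Real.rpow_def_of_pos hs0, ← Real.exp_add, ← Real.exp_add]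
        apply Real.exp_lt_exp.2
        have hlog : Real.log (α/2) - Real.log α < (α/2) / α - 1 := by
          rw [← Real.log_div hs0.ne' hA.ne']
          apply Real.log_lt_sub_one_of_pos (div_pos hs0 hA)
          rw [show α / 2 / α = 1/2 by field_simp]
          norm_num
        have := mul_lt_mul_of_pos_left hlog (by positivity : (0:ℝ) < c * α)
        have hca : c * α * ((α/2) / α - 1) = c * (α/2) - c * α := by field_simp
        nlinarith
      calc Real.exp (c * α) * α ^ (-(c * α)) * ((α/2) ^ (α - 1) * (α/2) ^ (c * α))
          = (α/2) ^ (α - 1) * (Real.exp (c * α) * α ^ (-(c * α)) * (α/2) ^ (c * α)) := by ring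
        _ < (α/2) ^ (α - 1) * Real.exp (c * (α/2)) := by
            apply mul_lt_mul_of_pos_left key (Real.rpow_pos_of_pos hs0 _)
  have hval : ∫ s in (0:ℝ)..α, Real.exp (c * α) * α ^ (-(c * α)) * s ^ r
      = Real.exp (c * α) * α ^ (-(c * α)) * (α ^ (r + 1) / (r + 1)) := by
    rw [intervalIntegral.integral_const_mul, integral_rpow (Or.inl (by linarith))]
    rw [Real.zero_rpow hr0.ne']
    ring
  have hsimp : (1 + c) * (Real.exp (c * α) * α ^ (-(c * α)) * (α ^ (r + 1) / (r + 1)))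
      = α ^ (α - 1) * Real.exp (c * α) := by
    have e1 : α ^ (r + 1) = α ^ (α - 1) * α ^ (c * α) * α := by
      rw [hr, show α - 1 + c * α + 1 = (α - 1) + (c * α) + 1 by ring,
        Real.rpow_add hA, Real.rpow_add hA, Real.rpow_one]
    have e2 : α ^ (-(c * α)) * α ^ (c * α) = 1 := by
      rw [← Real.rpow_add hA]; simp
    have hr1 : r + 1 = α * (1 + c) := by rw [hr]; ring
    rw [e1, hr1]
    field_simp
    linear_combination e2
  have h2 := mul_lt_mul_of_pos_left hlow (by linarith : (0:ℝ) < 1 + c)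
  rw [hval, hsimp] at h2
  exact h2

lemma anchor (hα : 1 ≤ α) (hc : 0 < c) : 0 < Phi α c α := by
  have hA : (0:ℝ) < α := by linarith
  have := anchor_key hα hc
  unfold Phi
  rw [Pq_alpha, Qq_alpha]
  nlinarith

end Anchor
section PhiPos

variable {α c x : ℝ}

lemma Phi_cont (hα : 1 ≤ α) : Continuous (Phi α c) := by
  unfold Phi
  have h1 : Continuous fun x : ℝ => x ^ (α - 1) := Real.continuous_rpow_const (by linarith)
  have h2 : Continuous (psi α c) := psi_cont hα
  have h3 : Continuous (Qq α c) := by unfold Qq; continuity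
  have h4 : Continuous (Pq α c) := Pq_cont
  fun_prop

lemma lam_deriv (hα : 1 ≤ α) {t : ℝ} (ht : 0 < t) (hP : Pq α c t ≠ 0) :
    deriv (fun y => Phi α c y / Pq α c y) t
      = t ^ (α - 1) * Real.exp (c * t) * (c * (α - t) * ((t - α + 1) ^ 2 + (α - 1)))
        / (Pq α c t) ^ 2 := by
  have h := (Phi_hasDeriv (c := c) hα ht).div (Pq_hasDeriv t) hP
  rw [show (fun y => Phi α c y / Pq α c y) = Phi α c / Pq α c from rfl, h.deriv, wronskian]

lemma lam_diff (hα : 1 ≤ α) {t : ℝ} (ht : 0 < t) (hP : Pq α c t ≠ 0) :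
    DifferentiableAt ℝ (fun y => Phi α c y / Pq α c y) t :=
  ((Phi_hasDeriv (c := c) hα ht).div (Pq_hasDeriv t) hP).differentiableAt

lemma psi_one (hc : 0 < c) (x : ℝ) :
    psi 1 c x = (Real.exp (c * x) - 1) / c := by
  have hder : ∀ s : ℝ, HasDerivAt (fun u : ℝ => Real.exp (c * u) / c) (Real.exp (c * s)) s := by
    intro s
    have h := ((Real.hasDerivAt_exp (c * s)).comp s ((hasDerivAt_id s).const_mul c)).div_const c
    refine h.congr_deriv ?_
    field_simp
  have : psi 1 c x = ∫ s in (0:ℝ)..x, Real.exp (c * s) := by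
    unfold psi
    apply intervalIntegral.integral_congr
    intro s _
    norm_num
  rw [this, intervalIntegral.integral_eq_sub_of_hasDerivAt (fun s _ => hder s)
    ((Real.continuous_exp.comp (continuous_const.mul continuous_id)).intervalIntegrable _ _)]
  simp
  ring

lemma phi_pos_one (hc : 0 < c) (hx : 0 < x) : 0 < Phi 1 c x := by
  set E := Real.exp (c * x) with hE
  have key : 1 + c * x + c ^ 2 * x - c ^ 2 < E := by
    rcases le_or_gt x 1 with h | h
    · have h2 := Real.add_one_lt_exp (show c * x ≠ 0 by positivity)
      have h3 : 0 ≤ c ^ 2 * (1 - x) := by nlinarith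
      rw [hE]; nlinarith
    · have hs := Real.sum_le_exp_of_nonneg (show (0:ℝ) ≤ c * x by positivity) 3
      simp [Finset.sum_range_succ] at hs
      have h3 : 0 < c ^ 2 * (x ^ 2 / 2 - x + 1) := by nlinarith [sq_nonneg (x - 1)]
      rw [hE]; nlinarith
  have hid : c * Phi 1 c x = x * (E - (1 + c * x + c ^ 2 * x - c ^ 2)) := by
    unfold Phi Pq Qq
    rw [psi_one hc]
    have e0 : (1:ℝ) - 1 = 0 := by norm_num
    rw [e0, Real.rpow_zero, ← hE]
    field_simp
    ring
  have h2 : 0 < c * Phi 1 c x := by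
    rw [hid]; exact mul_pos hx (sub_pos.2 key)
  by_contra h
  push_neg at h
  nlinarith [mul_nonpos_iff.2 (Or.inl ⟨hc.le, h⟩)]

lemma phi_pos (hα : 1 ≤ α) (hc : 0 < c) (hx : 0 < x) : 0 < Phi α c x := by
  rcases eq_or_lt_of_le hα with rfl | hα1
  · exact phi_pos_one hc hx
  set Λ := fun y => Phi α c y / Pq α c y with hΛ
  rcases lt_trichotomy x α with hxα | rfl | hxα
  · -- x < α
    rcases lt_trichotomy (Pq α c x) 0 with hP | hP | hP
    · -- P < 0 on [x, α]
      have hPlt : ∀ t ∈ Icc x α, Pq α c t < 0 := by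
        intro t ht
        have hd := P_decay hα hc hx ht.1 hP.le
        nlinarith [mul_nonneg (mul_nonneg hc.le (by linarith [ht.1] : (0:ℝ) ≤ t)) (sub_nonneg.2 ht.1)]
      have hmono : MonotoneOn Λ (Icc x α) := by
        apply monotoneOn_of_deriv_nonneg (convex_Icc x α)
        · apply ContinuousOn.div (Phi_cont hα).continuousOn Pq_cont.continuousOn
          exact fun t ht => (hPlt t ht).ne
        · rw [interior_Icc]
          intro t ht
          exact (lam_diff hα (hx.trans ht.1) (hPlt t ⟨ht.1.le, ht.2.le⟩).ne).differentiableWithinAt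
        · rw [interior_Icc]
          intro t ht
          rw [hΛ, lam_deriv hα (hx.trans ht.1) (hPlt t ⟨ht.1.le, ht.2.le⟩).ne]
          apply div_nonneg _ (sq_nonneg _)
          have h1 : (0:ℝ) ≤ c * (α - t) * ((t - α + 1) ^ 2 + (α - 1)) := by
            apply mul_nonneg (mul_nonneg hc.le (by linarith [ht.2]))
            nlinarith [sq_nonneg (t - α + 1)]
          exact mul_nonneg (mul_nonneg (Real.rpow_nonneg (by linarith [ht.1]) _)
            (Real.exp_pos _).le) h1
      have hle : Λ x ≤ Λ α :=
        hmono ⟨le_refl x, hxα.le⟩ ⟨hxα.le, le_refl α⟩ hxα.le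
      have hΛα : Λ α < 0 := by
        rw [hΛ]; simp only [Pq_alpha]
        apply div_neg_of_pos_of_neg (anchor hα hc) (by linarith)
      have hΛx : Λ x < 0 := lt_of_le_of_lt hle hΛα
      have := div_mul_cancel₀ (Phi α c x) hP.ne
      rw [hΛ] at hΛx
      nlinarith
    · -- P = 0 : use wronskian at x
      have hw := wronskian (α := α) (c := c) x
      rw [hP, mul_zero] at hw
      have hP' : α * (c - 1) - 2 * c * x < 0 := by
        have : α * (α - 1 - x) + c * x * (α - x) = 0 := hP
        have hx' : x * (α * (c - 1) - 2 * c * x) = -(c * x ^ 2) - α * (α - 1) := by nlinarith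
        nlinarith [mul_pos hc (mul_pos hx hx), mul_nonneg (by linarith : (0:ℝ) ≤ α) (by linarith : (0:ℝ) ≤ α - 1)]
      have hpos : 0 < x ^ (α - 1) * Real.exp (c * x) * (c * (α - x) * ((x - α + 1) ^ 2 + (α - 1))) := by
        have h1 : (0:ℝ) < c * (α - x) * ((x - α + 1) ^ 2 + (α - 1)) := by
          apply mul_pos (mul_pos hc (by linarith))
          nlinarith [sq_nonneg (x - α + 1)]
        have h2 : (0:ℝ) < x ^ (α - 1) := Real.rpow_pos_of_pos hx _
        exact mul_pos (mul_pos h2 (Real.exp_pos _)) h1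
      nlinarith
    · -- P > 0 on [0, x]
      have hPgt : ∀ t ∈ Icc 0 x, 0 < Pq α c t := by
        intro t ht
        rcases eq_or_lt_of_le ht.1 with rfl | ht0
        · rw [Pq_zero_val]; nlinarith
        by_contra h
        push_neg at h
        have hd := P_decay hα hc ht0 ht.2 h
        nlinarith [mul_nonneg (mul_nonneg hc.le hx.le) (sub_nonneg.2 ht.2)]
      have hcont : ContinuousOn Λ (Icc 0 x) := by
        apply ContinuousOn.div (Phi_cont hα).continuousOn Pq_cont.continuousOn
        exact fun t ht => (hPgt t ht).ne'
      have hmono : MonotoneOn Λ (Icc 0 x) := by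
        apply monotoneOn_of_deriv_nonneg (convex_Icc 0 x) hcont
        · rw [interior_Icc]
          intro t ht
          exact (lam_diff hα ht.1 (hPgt t ⟨ht.1.le, ht.2.le⟩).ne').differentiableWithinAt
        · rw [interior_Icc]
          intro t ht
          rw [hΛ, lam_deriv hα ht.1 (hPgt t ⟨ht.1.le, ht.2.le⟩).ne']
          apply div_nonneg _ (sq_nonneg _)
          have h1 : (0:ℝ) ≤ c * (α - t) * ((t - α + 1) ^ 2 + (α - 1)) := by
            apply mul_nonneg (mul_nonneg hc.le (by linarith [ht.2, hxα]))
            nlinarith [sq_nonneg (t - α + 1)]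
          exact mul_nonneg (mul_nonneg (Real.rpow_nonneg ht.1.le _)
            (Real.exp_pos _).le) h1
      have hstrict : StrictMonoOn Λ (Icc (x/2) x) := by
        apply strictMonoOn_of_deriv_pos (convex_Icc _ _)
          (hcont.mono (Icc_subset_Icc (by linarith) (le_refl x)))
        rw [interior_Icc]
        intro t ht
        have ht0 : 0 < t := by linarith [ht.1]
        rw [hΛ, lam_deriv hα ht0 (hPgt t ⟨ht0.le, ht.2.le⟩).ne']
        apply div_pos _ (pow_pos (hPgt t ⟨ht0.le, ht.2.le⟩) 2)
        have h1 : (0:ℝ) < c * (α - t) * ((t - α + 1) ^ 2 + (α - 1)) := by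
          apply mul_pos (mul_pos hc (by linarith [ht.2]))
          nlinarith [sq_nonneg (t - α + 1)]
        have h2 : (0:ℝ) < t ^ (α - 1) := Real.rpow_pos_of_pos ht0 _
        exact mul_pos (mul_pos h2 (Real.exp_pos _)) h1
      have h0 : Λ 0 = 0 := by
        rw [hΛ]; simp only [Phi_zero, zero_div]
      have hmid : 0 ≤ Λ (x/2) := by
        have := hmono (show (0:ℝ) ∈ Icc 0 x from ⟨le_refl 0, hx.le⟩)
          (show x/2 ∈ Icc 0 x from ⟨by linarith, by linarith⟩) (by linarith)
        rw [h0] at this; exact this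
      have hgt : Λ (x/2) < Λ x :=
        hstrict (show x/2 ∈ Icc (x/2) x from ⟨le_refl _, by linarith⟩)
          (show x ∈ Icc (x/2) x from ⟨by linarith, le_refl x⟩) (by linarith)
      have hΛx : 0 < Λ x := lt_of_le_of_lt hmid hgt
      rw [hΛ] at hΛx
      have := div_mul_cancel₀ (Phi α c x) hP.ne'
      nlinarith
  · exact anchor hα hc
  · -- α < x
    have hA : (0:ℝ) < α := by linarith
    have hPlt : ∀ t ∈ Icc α x, Pq α c t < 0 := by
      intro t ht
      have hd := P_decay hα hc hA ht.1 (by rw [Pq_alpha]; linarith)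
      rw [Pq_alpha] at hd
      nlinarith [mul_nonneg (mul_nonneg hc.le (by linarith [ht.1] : (0:ℝ) ≤ t)) (sub_nonneg.2 ht.1)]
    have hanti : AntitoneOn Λ (Icc α x) := by
      apply antitoneOn_of_deriv_nonpos (convex_Icc α x)
      · apply ContinuousOn.div (Phi_cont hα).continuousOn Pq_cont.continuousOn
        exact fun t ht => (hPlt t ht).ne
      · rw [interior_Icc]
        intro t ht
        exact (lam_diff hα (hA.trans ht.1) (hPlt t ⟨ht.1.le, ht.2.le⟩).ne).differentiableWithinAt
      · rw [interior_Icc]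
        intro t ht
        rw [hΛ, lam_deriv hα (hA.trans ht.1) (hPlt t ⟨ht.1.le, ht.2.le⟩).ne]
        apply div_nonpos_of_nonpos_of_nonneg _ (sq_nonneg _)
        have h1 : c * (α - t) * ((t - α + 1) ^ 2 + (α - 1)) ≤ 0 := by
          apply mul_nonpos_of_nonpos_of_nonneg
          · apply mul_nonpos_of_nonneg_of_nonpos hc.le (by linarith [ht.1])
          · nlinarith [sq_nonneg (t - α + 1)]
        have h2 : (0:ℝ) ≤ t ^ (α - 1) := Real.rpow_nonneg (by linarith [ht.1]) _
        nlinarith [mul_nonneg h2 (Real.exp_pos (c * t)).le, h1]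
    have hle : Λ x ≤ Λ α :=
      hanti ⟨le_refl α, hxα.le⟩ ⟨hxα.le, le_refl x⟩ hxα.le
    have hΛα : Λ α < 0 := by
      rw [hΛ]; simp only [Pq_alpha]
      apply div_neg_of_pos_of_neg (anchor hα hc) (by linarith)
    have hΛx : Λ x < 0 := lt_of_le_of_lt hle hΛα
    have hPx : Pq α c x < 0 := hPlt x ⟨hxα.le, le_refl x⟩
    rw [hΛ] at hΛx
    have := div_mul_cancel₀ (Phi α c x) hPx.ne
    nlinarith

end PhiPos
section Assemble

variable {α θ c x : ℝ}

noncomputable def Nf (α c x : ℝ) : ℝ :=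
  x ^ (α - 1) - (1 + c) * (Real.exp (-(c * x)) * psi α c x)

noncomputable def Df (α x : ℝ) : ℝ := (α - x) * x ^ (α - 1)

noncomputable def NfD (α c x : ℝ) : ℝ :=
  (α - 1) * x ^ (α - 1) / x
    - (1 + c) * ((-c) * Real.exp (-(c * x)) * psi α c x
        + Real.exp (-(c * x)) * (x ^ (α - 1) * Real.exp (c * x)))

noncomputable def DfD (α x : ℝ) : ℝ :=
  (-1) * x ^ (α - 1) + (α - x) * ((α - 1) * x ^ (α - 1) / x)

lemma rpow_hasDeriv (hx : 0 < x) :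
    HasDerivAt (fun x : ℝ => x ^ (α - 1)) ((α - 1) * x ^ (α - 1) / x) x := by
  have h := Real.hasDerivAt_rpow_const (x := x) (p := α - 1) (Or.inl hx.ne')
  have e : x ^ (α - 1 - 1) = x ^ (α - 1) / x := by
    rw [Real.rpow_sub hx, Real.rpow_one]
  rw [e] at h
  simpa [mul_div_assoc] using h

lemma expc_hasDeriv (c : ℝ) (x : ℝ) :
    HasDerivAt (fun x : ℝ => Real.exp (-(c * x))) ((-c) * Real.exp (-(c * x))) x := by
  have h := (Real.hasDerivAt_exp (-(c * x))).comp x (((hasDerivAt_id x).const_mul c).neg)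
  simpa [mul_comm, Function.comp_def, Pi.neg_def] using h

lemma Nf_hasDeriv (hα : 1 ≤ α) (hx : 0 < x) : HasDerivAt (Nf α c) (NfD α c x) x := by
  have h1 := rpow_hasDeriv (α := α) hx
  have h2 := ((expc_hasDeriv c x).mul (psi_hasDeriv (c := c) hα x)).const_mul (1 + c)
  exact h1.sub h2

lemma Df_hasDeriv (hx : 0 < x) : HasDerivAt (Df α) (DfD α x) x := by
  have h1 : HasDerivAt (fun x : ℝ => α - x) (-1) x := by
    simpa using (hasDerivAt_id x).const_sub α
  exact h1.mul (rpow_hasDeriv (α := α) hx)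

lemma key_num (hx : 0 < x) :
    NfD α c x * Df α x - Nf α c x * DfD α x
      = -(x ^ (α - 1) * Real.exp (-(c * x)) / x) * Phi α c x := by
  unfold NfD Df Nf DfD Phi Pq Qq
  rw [Real.exp_neg]
  field_simp
  ring

lemma Rf_deriv_neg (hα : 1 ≤ α) (hc : 0 < c) (hx : 0 < x) (hxα : x ≠ α) :
    HasDerivAt (fun y => α * (1 + c) * (Nf α c y / Df α y))
      (α * (1 + c) * ((NfD α c x * Df α x - Nf α c x * DfD α x) / (Df α x) ^ 2)) x
    ∧ α * (1 + c) * ((NfD α c x * Df α x - Nf α c x * DfD α x) / (Df α x) ^ 2) < 0 := by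
  have hD : Df α x ≠ 0 := by
    unfold Df
    exact mul_ne_zero (sub_ne_zero_of_ne (Ne.symm hxα)) (Real.rpow_pos_of_pos hx _).ne'
  constructor
  · exact ((Nf_hasDeriv hα hx).div (Df_hasDeriv hx) hD).const_mul _
  · have hnum : NfD α c x * Df α x - Nf α c x * DfD α x < 0 := by
      rw [key_num hx]
      have h1 : 0 < x ^ (α - 1) * Real.exp (-(c * x)) / x :=
        div_pos (mul_pos (Real.rpow_pos_of_pos hx _) (Real.exp_pos _)) hx
      have h2 := phi_pos hα hc hx
      nlinarith
    have hD2 : 0 < (Df α x) ^ 2 := by positivity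
    have hc1 : 0 < α * (1 + c) := by nlinarith
    exact mul_neg_of_pos_of_neg hc1 (div_neg_of_neg_of_pos hnum hD2)

lemma convDens_eq (hθ0 : 0 < θ) :
    convDens α θ = fun x => θ⁻¹ / Real.Gamma α
      * (Real.exp (-x / θ) * psi α ((1 - θ) / θ) x) := by
  funext x
  unfold convDens
  have step1 : (∫ t in (0:ℝ)..x, gammaDens α (x - t) * (θ⁻¹ * Real.exp (-t / θ)))
      = ∫ s in (0:ℝ)..x, gammaDens α s * (θ⁻¹ * Real.exp (-(x - s) / θ)) := by
    have h := intervalIntegral.integral_comp_sub_left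
      (fun s => gammaDens α s * (θ⁻¹ * Real.exp (-(x - s) / θ))) x (a := 0) (b := x)
    simp only [sub_sub_cancel, sub_self, sub_zero] at h
    rw [← h]
  rw [step1]
  unfold psi
  rw [← mul_assoc, ← intervalIntegral.integral_const_mul]
  apply intervalIntegral.integral_congr
  intro s _
  unfold gammaDens
  have he : Real.exp (-s) * Real.exp (-(x - s) / θ)
      = Real.exp (-x / θ) * Real.exp ((1 - θ) / θ * s) := by
    rw [← Real.exp_add, ← Real.exp_add]
    congr 1
    field_simp
    ring
  linear_combination (s ^ (α - 1) * θ⁻¹ / Real.Gamma α) * he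

lemma conv_hasDeriv (hα : 1 ≤ α) (hθ0 : 0 < θ) (x : ℝ) :
    HasDerivAt (convDens α θ)
      (θ⁻¹ / Real.Gamma α * ((-θ⁻¹ * Real.exp (-x / θ)) * psi α ((1 - θ) / θ) x
        + Real.exp (-x / θ) * (x ^ (α - 1) * Real.exp ((1 - θ) / θ * x)))) x := by
  rw [convDens_eq hθ0]
  have hθ : θ ≠ 0 := hθ0.ne'
  have h1 : HasDerivAt (fun y : ℝ => Real.exp (-y / θ)) (-θ⁻¹ * Real.exp (-x / θ)) x := by
    have h : HasDerivAt (fun y : ℝ => Real.exp (-y / θ)) (Real.exp (-x / θ) * (-1 / θ)) x := by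
      simpa [Function.comp_def] using (Real.hasDerivAt_exp (-x / θ)).comp x ((hasDerivAt_id' x).neg.div_const θ)
    convert h using 1
    ring
  exact (h1.mul (psi_hasDeriv (c := (1 - θ) / θ) hα x)).const_mul _

lemma g_hasDeriv (hx : 0 < x) :
    HasDerivAt (gammaDens (α + 1))
      ((α * x ^ (α - 1) * Real.exp (-x) + x ^ α * (-Real.exp (-x))) / Real.Gamma (α + 1)) x := by
  have e : gammaDens (α + 1) = fun t => t ^ α * Real.exp (-t) / Real.Gamma (α + 1) := by
    funext t; unfold gammaDens; norm_num
  rw [e]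
  have h1 : HasDerivAt (fun t : ℝ => t ^ α) (α * x ^ (α - 1)) x :=
    Real.hasDerivAt_rpow_const (Or.inl hx.ne')
  have h2 : HasDerivAt (fun t : ℝ => Real.exp (-t)) (-Real.exp (-x)) x := by
    simpa [Function.comp_def] using (Real.hasDerivAt_exp (-x)).comp x (hasDerivAt_neg x)
  exact (h1.mul h2).div_const (Real.Gamma (α + 1))

lemma ratio_eq (hα : 1 ≤ α) (hθ0 : 0 < θ) (hθ1 : θ < 1) (hx : 0 < x) (hxα : x ≠ α) :
    deriv (convDens α θ) x / deriv (gammaDens (α + 1)) x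
      = α * (1 + (1 - θ) / θ) * (Nf α ((1 - θ) / θ) x / Df α x) := by
  have hθ : θ ≠ 0 := hθ0.ne'
  rw [(conv_hasDeriv hα hθ0 x).deriv, (g_hasDeriv hx).deriv]
  have hG : 0 < Real.Gamma α := Real.Gamma_pos_of_pos (by linarith)
  have hG1 : Real.Gamma (α + 1) = α * Real.Gamma α := Real.Gamma_add_one (by linarith)
  have hθinv : θ⁻¹ = 1 + (1 - θ) / θ := by field_simp; ring
  have he : Real.exp (-x / θ) = Real.exp (-x) * Real.exp (-((1 - θ) / θ * x)) := by
    rw [← Real.exp_add]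
    congr 1
    field_simp
    ring
  have hxa : x ^ α = x ^ (α - 1) * x := by
    nth_rewrite 1 [show α = α - 1 + 1 by ring]
    exact Real.rpow_add_one hx.ne' _
  have hy : (0:ℝ) < x ^ (α - 1) := Real.rpow_pos_of_pos hx _
  have hαx : α - x ≠ 0 := sub_ne_zero_of_ne (Ne.symm hxα)
  have hA : (0:ℝ) < α := by linarith
  have hfac : α * x ^ (α - 1) * Real.exp (-x) + x ^ α * (-Real.exp (-x))
      = (α - x) * x ^ (α - 1) * Real.exp (-x) := by
    rw [hxa]; ring
  rw [hfac, hG1, he, hθinv]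
  unfold Nf Df
  rw [Real.exp_neg x, Real.exp_neg ((1 - θ) / θ * x)]
  have hcx : -((1 - θ) / θ * x) = -((1 - θ) / θ * x) := rfl
  field_simp
  ring

end Assemble

theorem stmt_11 (α θ : ℝ) (hα : 1 ≤ α) (hθ : θ ∈ Ioo (0:ℝ) 1) :
    StrictAntiOn (fun x => deriv (convDens α θ) x / deriv (gammaDens (α + 1)) x)
      (Ioo (0:ℝ) α) ∧
    StrictAntiOn (fun x => deriv (convDens α θ) x / deriv (gammaDens (α + 1)) x)
      (Ioi α) := by
  obtain ⟨hθ0, hθ1⟩ := hθ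
  have hc : 0 < (1 - θ) / θ := div_pos (by linarith) hθ0
  have hRanti : ∀ S : Set ℝ, S ⊆ Ioi (0:ℝ) → (∀ y ∈ S, y ≠ α) → Convex ℝ S →
      interior S = S →
      StrictAntiOn (fun y => α * (1 + (1 - θ) / θ) * (Nf α ((1 - θ) / θ) y / Df α y)) S := by
    intro S hS hSα hconv hint
    apply strictAntiOn_of_deriv_neg hconv
    · intro y hy
      exact ((Rf_deriv_neg hα hc (hS hy) (hSα y hy)).1).continuousAt.continuousWithinAt
    · rw [hint]
      intro y hy
      obtain ⟨h1, h2⟩ := Rf_deriv_neg hα hc (hS hy) (hSα y hy)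
      rw [h1.deriv]
      exact h2
  have htrans : ∀ S : Set ℝ, S ⊆ Ioi (0:ℝ) → (∀ y ∈ S, y ≠ α) →
      StrictAntiOn (fun y => α * (1 + (1 - θ) / θ) * (Nf α ((1 - θ) / θ) y / Df α y)) S →
      StrictAntiOn (fun x => deriv (convDens α θ) x / deriv (gammaDens (α + 1)) x) S := by
    intro S hS hSα hanti a ha b hb hab
    have ea := ratio_eq hα hθ0 hθ1 (hS ha) (hSα a ha)
    have eb := ratio_eq hα hθ0 hθ1 (hS hb) (hSα b hb)
    show deriv (convDens α θ) b / deriv (gammaDens (α + 1)) b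
        < deriv (convDens α θ) a / deriv (gammaDens (α + 1)) a
    rw [ea, eb]
    exact hanti ha hb hab
  constructor
  · exact htrans _ (fun y hy => hy.1) (fun y hy => hy.2.ne) (hRanti _ (fun y hy => hy.1)
      (fun y hy => hy.2.ne) (convex_Ioo _ _) isOpen_Ioo.interior_eq)
  · have hA : (0:ℝ) < α := by linarith
    exact htrans _ (fun y hy => hA.trans hy) (fun y hy => ne_of_gt hy)
      (hRanti _ (fun y hy => hA.trans hy) (fun y hy => ne_of_gt hy)
        (convex_Ioi _) isOpen_Ioi.interior_eq)
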